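/- Let G be a simple graph and let v be a vertex of G. Let G_v be the graph obtained from G by toggling the edge/nonedge status of every pair {u, v} with u ≠ v. Then a triple of three distinct vertices is a frustrated triangle of G_v if and only if it is a frustrated triangle of G; in particular, f(G_v) = f(G). -/

import Mathlib

open Finset

open Classical in
/-- A triple of distinct vertices is *frustrated* if it induces an odd number of edges. -/
noncomputable def frustrated {V : Type*} (G : SimpleGraph V) (u v w : V) : Prop :=
  Odd ((if G.Adj u v then 1 else 0) + (if G.Adj u w then 1 else 0) +
       (if G.Adj v w then 1 else 0) : ℕ)

/-- The number of frustrated triangles of `G`: the number of 3-element vertex subsets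
inducing an odd number of edges. -/
noncomputable def fCount {V : Type*} [Fintype V] [DecidableEq V] (G : SimpleGraph V) : ℕ := by
  classical
  exact ((Finset.univ.powersetCard 3).filter
    (fun s : Finset V => ∃ u v w : V, u ≠ v ∧ u ≠ w ∧ v ≠ w ∧ s = {u, v, w} ∧
      frustrated G u v w)).card

/-- The graph obtained from `G` by flipping the vertex `v`, i.e. toggling the
edge/nonedge status of every pair `{u, v}` with `u ≠ v`. -/
def flipVertex {V : Type*} (G : SimpleGraph V) (v : V) : SimpleGraph V where
  Adj u w := u ≠ w ∧ ((u = v ∨ w = v) ↔ ¬ G.Adj u w)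
  symm := ⟨by
    intro u w h
    obtain ⟨h1, h2⟩ := h
    refine ⟨h1.symm, ?_⟩
    rw [or_comm, SimpleGraph.adj_comm]
    exact h2⟩
  loopless := ⟨fun u h => h.1 rfl⟩

open Classical in
lemma flip_adj_key {V : Type*} (G : SimpleGraph V) (v u w : V) (h : u ≠ w) :
    (flipVertex G v).Adj u w ↔ ((u = v ∨ w = v) ↔ ¬ G.Adj u w) := by
  constructor
  · exact fun ⟨_, h2⟩ => h2
  · exact fun h2 => ⟨h, h2⟩

theorem flipVertex_preserves_frustrated
    {V : Type*} [Fintype V] [DecidableEq V] (G : SimpleGraph V) (v : V) :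
    (∀ u w x : V, u ≠ w → u ≠ x → w ≠ x →
      (frustrated (flipVertex G v) u w x ↔ frustrated G u w x)) ∧
    fCount (flipVertex G v) = fCount G := by
  classical
  have key : ∀ u w x : V, u ≠ w → u ≠ x → w ≠ x →
      (frustrated (flipVertex G v) u w x ↔ frustrated G u w x) := by
    intro u w x huw hux hwx
    unfold frustrated
    rw [flip_adj_key G v u w huw, flip_adj_key G v u x hux, flip_adj_key G v w x hwx]
    rcases eq_or_ne u v with hu | hu <;> rcases eq_or_ne w v with hw | hw <;>
      rcases eq_or_ne x v with hx | hx <;>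
      by_cases h1 : G.Adj u w <;> by_cases h2 : G.Adj u x <;> by_cases h3 : G.Adj w x <;>
      simp_all <;> decide
  refine ⟨key, ?_⟩
  unfold fCount
  congr 1
  apply Finset.filter_congr
  intro s _
  constructor
  · rintro ⟨u, w, x, h1, h2, h3, h4, h5⟩
    exact ⟨u, w, x, h1, h2, h3, h4, (key u w x h1 h2 h3).mp h5⟩
  · rintro ⟨u, w, x, h1, h2, h3, h4, h5⟩
    exact ⟨u, w, x, h1, h2, h3, h4, (key u w x h1 h2 h3).mpr h5⟩
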